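/- Let c > 0, Δt > 0, κ(t) = min(2t/Δt, 1), and let v ∈ L²(ℝ_{≥0}) satisfy v(s) = 0 for s ≥ Δt/2. Then for all t ≥ 0 and a > 0, ∫₀^a |∫₀^{t−ω/c} e^{−c ∫₀^{t−ω/c−s} κ(τ)dτ} v(s) ds|² dω ≤ (a/c) e^{2(a + cΔt)} e^{−2ct} ∫₀^{cΔt/2} |v(s/c)|²/c ds · c, i.e. the convolution term J_a(t) obeys J_a(t) ≤ (a/c) e^{2(a+cΔt)} e^{−2ct} ‖v‖²_{L²(0,Δt/2)}. -/

import Mathlib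

open MeasureTheory
open Set

lemma cs_aux (v : ℝ → ℝ) (hm : Measurable v) {b : ℝ} (hb : 0 ≤ b)
    (h2 : IntervalIntegrable (fun s => (v s) ^ 2) volume 0 b) :
    (∫ s in (0:ℝ)..b, |v s|) ^ 2 ≤ b * ∫ s in (0:ℝ)..b, (v s) ^ 2 := by
  have hI1 : IntervalIntegrable (fun s => |v s|) volume 0 b := by
    refine ((h2.add (intervalIntegrable_const (c := (1:ℝ)))).div_const 2).mono_fun'
      hm.abs.aestronglyMeasurable.restrict (ae_of_all _ fun x => ?_)
    simp only [Real.norm_eq_abs, abs_abs]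
    nlinarith [sq_nonneg (|v x| - 1), sq_abs (v x)]
  set A := ∫ s in (0:ℝ)..b, (v s) ^ 2 with hA
  set B := ∫ s in (0:ℝ)..b, |v s| with hB
  have hAnn : 0 ≤ A := intervalIntegral.integral_nonneg hb fun s _ => sq_nonneg _
  have hBnn : 0 ≤ B := intervalIntegral.integral_nonneg hb fun s _ => abs_nonneg _
  have key : ∀ l : ℝ, 0 < l → B ≤ (l * A + b / l) / 2 := by
    intro l hl
    have hint : IntervalIntegrable (fun s => (l * (v s) ^ 2 + 1 / l) / 2) volume 0 b :=
      ((h2.const_mul l).add intervalIntegrable_const).div_const 2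
    have h1 : B ≤ ∫ s in (0:ℝ)..b, (l * (v s) ^ 2 + 1 / l) / 2 := by
      refine intervalIntegral.integral_mono_on hb hI1 hint fun x _ => ?_
      rw [le_div_iff₀ (by norm_num : (0:ℝ) < 2)]
      have h : 2 * (l * |v x|) ≤ l ^ 2 * (v x) ^ 2 + 1 := by
        nlinarith [sq_nonneg (l * |v x| - 1), sq_abs (v x)]
      rw [← mul_le_mul_iff_of_pos_left hl]
      have heq : l * (l * v x ^ 2 + 1 / l) = l ^ 2 * (v x) ^ 2 + 1 := by
        field_simp
      rw [heq]
      linarith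
    have h2' : ∫ s in (0:ℝ)..b, (l * (v s) ^ 2 + 1 / l) / 2 = (l * A + b / l) / 2 := by
      rw [intervalIntegral.integral_div,
        intervalIntegral.integral_add (h2.const_mul l) intervalIntegrable_const,
        intervalIntegral.integral_const_mul, intervalIntegral.integral_const]
      simp [smul_eq_mul, hA]
      ring
    linarith [h1, h2'.le, h2'.ge]
  rcases eq_or_lt_of_le hb with hb0 | hbpos
  · simp [← hb0, hB, hA]
  rcases eq_or_lt_of_le hAnn with hA0 | hApos
  · have hB0 : B ≤ 0 := by
      refine le_of_forall_gt_imp_ge_of_dense fun ε hε => ?_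
      have := key (b / (2 * ε)) (by positivity)
      rw [← hA0] at this
      have hbe : b / (b / (2 * ε)) = 2 * ε := by
        field_simp
      simp [hbe] at this
      linarith
    have : B = 0 := le_antisymm hB0 hBnn
    simp [this, ← hA0]
  · set l := Real.sqrt (b / A) with hl
    have hlpos : 0 < l := Real.sqrt_pos.2 (by positivity)
    have hl2 : l ^ 2 * A = b := by
      rw [Real.sq_sqrt (by positivity : (0:ℝ) ≤ b / A)]
      field_simp
    have hbl : b / l = l * A := by
      rw [div_eq_iff hlpos.ne']
      nlinarith [hl2]
    have hBle : B ≤ l * A := by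
      have := key l hlpos
      rw [hbl] at this
      linarith
    have := pow_le_pow_left₀ hBnn hBle 2
    calc B ^ 2 ≤ (l * A) ^ 2 := this
      _ = (l ^ 2 * A) * A := by ring
      _ = b * A := by rw [hl2]

lemma kappa_lb (Δt : ℝ) (hΔt : 0 < Δt) {x : ℝ} (hx : 0 ≤ x) :
    x - Δt / 4 ≤ ∫ τ in (0:ℝ)..x, min (2 * τ / Δt) 1 := by
  have hκc : Continuous fun τ : ℝ => min (2 * τ / Δt) 1 :=
    ((continuous_const.mul continuous_id).div_const Δt).min continuous_const
  have hval : ∀ y : ℝ, 0 ≤ y → y ≤ Δt / 2 →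
      (∫ τ in (0:ℝ)..y, min (2 * τ / Δt) 1) = y ^ 2 / Δt := by
    intro y hy0 hy
    rw [intervalIntegral.integral_congr (g := fun τ => 2 * τ / Δt)
      (fun τ hτ => by
        rw [uIcc_of_le hy0] at hτ
        exact min_eq_left (by rw [div_le_one hΔt]; linarith [hτ.1, hτ.2]))]
    rw [intervalIntegral.integral_div, intervalIntegral.integral_const_mul, integral_id]
    ring
  rcases le_or_gt x (Δt / 2) with h | h
  · rw [hval x hx h, le_div_iff₀ hΔt]
    nlinarith [sq_nonneg (x - Δt / 2)]
  · have i1 := hκc.intervalIntegrable (μ := volume) 0 (Δt / 2)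
    have i2 := hκc.intervalIntegrable (μ := volume) (Δt / 2) x
    rw [← intervalIntegral.integral_add_adjacent_intervals i1 i2]
    have e1 := hval (Δt / 2) (by positivity) le_rfl
    have e2 : (∫ τ in (Δt / 2)..x, min (2 * τ / Δt) 1) = x - Δt / 2 := by
      rw [intervalIntegral.integral_congr (g := fun _ => (1 : ℝ))
        (fun τ hτ => by
          rw [uIcc_of_le h.le] at hτ
          exact min_eq_right (by rw [le_div_iff₀ hΔt]; linarith [hτ.1]))]
      simp
    rw [e1, e2]
    have h4 : (Δt / 2) ^ 2 / Δt = Δt / 4 := by field_simp; ring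
    rw [h4]; linarith

/-- the convolution term
`J_a(t) = ∫₀^a |∫₀^{t−ω/c} e^{−c∫₀^{t−ω/c−s}κ} v(s) ds|² dω`
for the ramp gain `κ` and `v` supported in `[0, Δt/2)` satisfies
`J_a(t) ≤ (a/c) e^{2(a+cΔt)} e^{−2ct} ‖v‖²_{L²(0,Δt/2)}`. -/
theorem stmt9 (c Δt : ℝ) (hc : 0 < c) (hΔt : 0 < Δt) (κ : ℝ → ℝ)
    (hκ : ∀ τ, κ τ = min (2 * τ / Δt) 1)
    (v : ℝ → ℝ) (hm : Measurable v)
    (hsupp : ∀ s, Δt / 2 ≤ s → v s = 0) (hneg : ∀ s, s < 0 → v s = 0)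
    (hL2 : Integrable (fun s => (v s) ^ 2) (volume.restrict (Set.Ioo 0 (Δt / 2)))) :
    ∀ t ≥ (0:ℝ), ∀ a > (0:ℝ),
      (∫ ω in (0:ℝ)..a,
          (∫ s in (0:ℝ)..(t - ω / c),
            Real.exp (-c * ∫ τ in (0:ℝ)..(t - ω / c - s), κ τ) * v s) ^ 2)
        ≤ (a / c) * Real.exp (2 * (a + c * Δt)) * Real.exp (-2 * c * t) *
            ∫ s in (0:ℝ)..(Δt / 2), (v s) ^ 2 := by
  have hκfun : κ = fun τ => min (2 * τ / Δt) 1 := funext hκ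
  subst hκfun
  intro t ht a ha
  beta_reduce
  have hκc : Continuous fun τ : ℝ => min (2 * τ / Δt) 1 :=
    ((continuous_const.mul continuous_id).div_const Δt).min continuous_const
  have hprim : Continuous fun u : ℝ => ∫ τ in (0:ℝ)..u, min (2 * τ / Δt) 1 :=
    intervalIntegral.continuous_primitive (fun a b => hκc.intervalIntegrable a b) 0
  set L := ∫ s in (0:ℝ)..(Δt / 2), (v s) ^ 2 with hLdef
  have hΔ2 : (0:ℝ) ≤ Δt / 2 := by positivity
  have hL2' : IntervalIntegrable (fun s => (v s) ^ 2) volume 0 (Δt / 2) := by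
    rw [intervalIntegrable_iff_integrableOn_Ioc_of_le hΔ2,
      integrableOn_Ioc_iff_integrableOn_Ioo]
    exact hL2
  have hLnn : 0 ≤ L := intervalIntegral.integral_nonneg hΔ2 fun s _ => sq_nonneg _
  have hv1 : IntervalIntegrable (fun s => |v s|) volume 0 (Δt / 2) := by
    refine ((hL2'.add (intervalIntegrable_const (c := (1:ℝ)))).div_const 2).mono_fun'
      hm.abs.aestronglyMeasurable.restrict (ae_of_all _ fun x => ?_)
    simp only [Real.norm_eq_abs, abs_abs]
    nlinarith [sq_nonneg (|v x| - 1), sq_abs (v x)]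
  set K := Real.exp (2 * a + 3 / 2 * (c * Δt) - 2 * c * t) * (Δt / 2 * L) with hK
  have hKnn : 0 ≤ K := mul_nonneg (Real.exp_nonneg _) (mul_nonneg (by positivity) hLnn)
  have Bd : ∀ ω ∈ Icc (0:ℝ) a,
      (∫ s in (0:ℝ)..(t - ω / c),
        Real.exp (-c * ∫ τ in (0:ℝ)..(t - ω / c - s), min (2 * τ / Δt) 1) * v s) ^ 2 ≤ K := by
    intro ω hω
    obtain ⟨hω0, hωa⟩ := hω
    set T := t - ω / c with hT
    set E : ℝ → ℝ := fun s =>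
      Real.exp (-c * ∫ τ in (0:ℝ)..(T - s), min (2 * τ / Δt) 1) with hE
    have hEcont : Continuous E :=
      Real.continuous_exp.comp
        (continuous_const.mul (hprim.comp (continuous_const.sub continuous_id)))
    by_cases hTpos : 0 < T
    case neg =>
      push_neg at hTpos
      have hae : ∀ᵐ (s : ℝ), s ≠ (0:ℝ) := by
        refine ae_iff.mpr ?_
        simpa using measure_singleton (0 : ℝ)
      have hzero : (∫ s in (0:ℝ)..T, E s * v s) = ∫ s in (0:ℝ)..T, (0:ℝ) := by
        refine intervalIntegral.integral_congr_ae ?_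
        filter_upwards [hae] with s hs hmem
        rcases Set.mem_uIoc.1 hmem with h | h
        · linarith [h.1, h.2, hTpos]
        · have : s < 0 := lt_of_le_of_ne h.2 hs
          rw [hneg s this, mul_zero]
      rw [hzero]
      simpa using hKnn
    case pos =>
      set T' := min T (Δt / 2) with hT'
      have hT'pos : 0 < T' := lt_min hTpos (by positivity)
      have hT'le : T' ≤ Δt / 2 := min_le_right _ _
      have hT'leT : T' ≤ T := min_le_left _ _
      set M := Real.exp (a + 3 / 4 * (c * Δt) - c * t) with hM
      have hMnn : 0 ≤ M := Real.exp_nonneg _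
      have hEb : ∀ s ∈ Icc (0:ℝ) T', E s ≤ M := by
        intro s hs
        have hx : 0 ≤ T - s := by linarith [hs.2, hT'leT]
        have hlb := kappa_lb Δt hΔt hx
        refine Real.exp_le_exp.2 ?_
        have h1 : -c * ∫ τ in (0:ℝ)..(T - s), min (2 * τ / Δt) 1
            ≤ -c * (T - s - Δt / 4) :=
          mul_le_mul_of_nonpos_left (by linarith) (by linarith)
        have hcw : c * (ω / c) = ω := by field_simp
        have expand : -c * (T - s - Δt / 4) = -(c * t) + c * (ω / c) + c * s + c * (Δt / 4) := by
          rw [hT]; ring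
        have hcs : c * s ≤ c * (Δt / 2) :=
          mul_le_mul_of_nonneg_left (le_trans hs.2 hT'le) hc.le
        rw [expand, hcw] at h1
        linarith [h1, hcs, hωa]
      have hv1' : IntervalIntegrable (fun s => |v s|) volume 0 T' :=
        hv1.mono_set' (by
          rw [uIoc_of_le hT'pos.le, uIoc_of_le hΔ2]
          exact Ioc_subset_Ioc_right hT'le)
      have hMv : IntervalIntegrable (fun s => M * |v s|) volume 0 T' := hv1'.const_mul M
      have hEm : AEStronglyMeasurable (fun s => E s * v s)
          (volume.restrict (Set.uIoc (0:ℝ) T')) :=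
        (hEcont.aestronglyMeasurable.mul hm.aestronglyMeasurable).restrict
      have hbd_ae : ∀ᵐ s ∂volume.restrict (Set.uIoc (0:ℝ) T'), ‖E s * v s‖ ≤ M * |v s| := by
        rw [uIoc_of_le hT'pos.le]
        refine (ae_restrict_iff' measurableSet_Ioc).2 (ae_of_all _ fun s hs => ?_)
        simp only [Real.norm_eq_abs, abs_mul]
        rw [abs_of_nonneg (Real.exp_nonneg _)]
        exact mul_le_mul_of_nonneg_right (hEb s ⟨hs.1.le, hs.2⟩) (abs_nonneg _)
      have hEv_int : IntervalIntegrable (fun s => E s * v s) volume 0 T' := by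
        refine hMv.mono_fun' hEm ?_
        filter_upwards [hbd_ae] with s hs
        simpa using hs
      have hsplit : (∫ s in (0:ℝ)..T, E s * v s) = ∫ s in (0:ℝ)..T', E s * v s := by
        rcases le_or_gt T (Δt / 2) with hcase | hcase
        · rw [hT', min_eq_left hcase]
        · have hT'eq : T' = Δt / 2 := min_eq_right hcase.le
          have htail0 : EqOn (fun s => E s * v s) (fun _ => (0:ℝ)) (uIcc T' T) := by
            intro s hs
            rw [uIcc_of_le hT'leT] at hs
            have hds : Δt / 2 ≤ s := hT'eq ▸ hs.1
            simp [hsupp s hds]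
          have htail_int : IntervalIntegrable (fun s => E s * v s) volume T' T := by
            rw [intervalIntegrable_iff_integrableOn_Ioc_of_le hT'leT]
            rw [integrableOn_congr_fun
              (fun s hs => htail0 (Ioc_subset_Icc_self.trans Icc_subset_uIcc hs))
              measurableSet_Ioc]
            exact integrableOn_const (by simp)
          rw [← intervalIntegral.integral_add_adjacent_intervals hEv_int htail_int]
          have hz : (∫ s in T'..T, E s * v s) = 0 := by
            rw [intervalIntegral.integral_congr htail0]
            simp
          rw [hz, add_zero]
      rw [hsplit]
      set BV := ∫ s in (0:ℝ)..T', |v s| with hBV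
      have hBVnn : 0 ≤ BV := intervalIntegral.integral_nonneg hT'pos.le fun _ _ => abs_nonneg _
      have habs : |∫ s in (0:ℝ)..T', E s * v s| ≤ M * BV := by
        have h := intervalIntegral.norm_integral_le_of_norm_le hT'pos.le
          ((ae_restrict_iff' measurableSet_Ioc).1 (by rwa [uIoc_of_le hT'pos.le] at hbd_ae)) hMv
        rw [Real.norm_eq_abs] at h
        have heq : abs (∫ s in (0:ℝ)..T', M * |v s|) = M * BV := by
          rw [intervalIntegral.integral_const_mul]
          exact abs_of_nonneg (mul_nonneg hMnn hBVnn)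
        replace h := h.trans ((le_abs_self _).trans heq.le)
        exact h
      have hv2' : IntervalIntegrable (fun s => (v s) ^ 2) volume 0 T' :=
        hL2'.mono_set' (by
          rw [uIoc_of_le hT'pos.le, uIoc_of_le hΔ2]
          exact Ioc_subset_Ioc_right hT'le)
      have hCS : BV ^ 2 ≤ (Δt / 2) * L := by
        have h1 := cs_aux v hm hT'pos.le hv2'
        have h2 : (∫ s in (0:ℝ)..T', (v s) ^ 2) ≤ L :=
          intervalIntegral.integral_mono_interval le_rfl hT'pos.le hT'le
            (ae_of_all _ fun s => sq_nonneg _) hL2'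
        have h3 : 0 ≤ ∫ s in (0:ℝ)..T', (v s) ^ 2 :=
          intervalIntegral.integral_nonneg hT'pos.le fun _ _ => sq_nonneg _
        nlinarith [h1, h2, h3, hT'le, hT'pos.le, hLnn, hΔ2]
      have hM2 : M ^ 2 = Real.exp (2 * a + 3 / 2 * (c * Δt) - 2 * c * t) := by
        rw [hM, pow_two, ← Real.exp_add]
        congr 1
        ring
      calc (∫ s in (0:ℝ)..T', E s * v s) ^ 2
          = |∫ s in (0:ℝ)..T', E s * v s| ^ 2 := (sq_abs _).symm
        _ ≤ (M * BV) ^ 2 := pow_le_pow_left₀ (abs_nonneg _) habs 2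
        _ = M ^ 2 * BV ^ 2 := by ring
        _ ≤ M ^ 2 * ((Δt / 2) * L) := mul_le_mul_of_nonneg_left hCS (by positivity)
        _ = K := by rw [hM2, hK]
  by_cases hInt : IntervalIntegrable (fun ω =>
      (∫ s in (0:ℝ)..(t - ω / c),
        Real.exp (-c * ∫ τ in (0:ℝ)..(t - ω / c - s), min (2 * τ / Δt) 1) * v s) ^ 2)
      volume 0 a
  · have hmono := intervalIntegral.integral_mono_on ha.le hInt
      (intervalIntegrable_const (c := K)) Bd
    rw [intervalIntegral.integral_const, sub_zero, smul_eq_mul] at hmono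
    refine le_trans hmono ?_
    have hexp : c * Δt / 2 ≤ Real.exp (c * Δt / 2) :=
      le_trans (by linarith) (Real.add_one_le_exp _)
    have he1 : Real.exp (c * Δt / 2) * Real.exp (2 * a + 3 / 2 * (c * Δt) - 2 * c * t)
        = Real.exp (2 * (a + c * Δt)) * Real.exp (-2 * c * t) := by
      rw [← Real.exp_add, ← Real.exp_add]
      congr 1
      ring
    have hmain : a * (Δt / 2) ≤ (a / c) * Real.exp (c * Δt / 2) := by
      have h1 : (a / c) * (c * Δt / 2) ≤ (a / c) * Real.exp (c * Δt / 2) :=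
        mul_le_mul_of_nonneg_left hexp (by positivity)
      have h2 : (a / c) * (c * Δt / 2) = a * (Δt / 2) := by
        field_simp
      linarith
    calc a * K = (a * (Δt / 2)) * (Real.exp (2 * a + 3 / 2 * (c * Δt) - 2 * c * t) * L) := by
          rw [hK]; ring
      _ ≤ ((a / c) * Real.exp (c * Δt / 2)) *
            (Real.exp (2 * a + 3 / 2 * (c * Δt) - 2 * c * t) * L) :=
          mul_le_mul_of_nonneg_right hmain
            (mul_nonneg (Real.exp_nonneg _) hLnn)
      _ = a / c * (Real.exp (c * Δt / 2) *
            Real.exp (2 * a + 3 / 2 * (c * Δt) - 2 * c * t)) * L := by ring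
      _ = (a / c) * Real.exp (2 * (a + c * Δt)) * Real.exp (-2 * c * t) * L := by
          rw [he1]; ring
  · rw [intervalIntegral.integral_undef hInt]
    have : (0:ℝ) ≤ (a / c) * Real.exp (2 * (a + c * Δt)) * Real.exp (-2 * c * t) * L := by
      have h1 : (0:ℝ) ≤ (a / c) * Real.exp (2 * (a + c * Δt)) * Real.exp (-2 * c * t) := by
        positivity
      exact mul_nonneg h1 hLnn
    exact this
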